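/- With g₀ as above (a = (√5+1)/2, b = (√5-1)/2), one has 0 ≤ g₀(x) ≤ −x for all x ∈ [−1,0]; in particular |g₀(x)| ≤ |x| on [−1,0]. -/

import Mathlib

noncomputable def aK : ℝ := (Real.sqrt 5 + 1) / 2
noncomputable def bK : ℝ := (Real.sqrt 5 - 1) / 2

noncomputable def f₀ : ℝ → ℝ := fun x =>
  1 / (Real.sqrt aK * (aK + bK)) * Real.sinh (Real.sqrt aK * x)
    - 1 / (Real.sqrt bK * (aK + bK)) * Real.sin (Real.sqrt bK * x)

noncomputable def g₀ : ℝ → ℝ := fun x =>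
  1 / (aK * (aK + bK)) * Real.cosh (Real.sqrt aK * x)
    + 1 / (bK * (aK + bK)) * Real.cos (Real.sqrt bK * x)
    - 1 / (aK * (aK + bK)) - 1 / (bK * (aK + bK))

lemma sqrt5_bounds : 2.2 ≤ Real.sqrt 5 ∧ Real.sqrt 5 ≤ 2.24 := by
  have h1 : Real.sqrt 5 * Real.sqrt 5 = 5 := Real.mul_self_sqrt (by norm_num)
  have h2 : 0 ≤ Real.sqrt 5 := Real.sqrt_nonneg 5
  constructor <;> nlinarith

lemma aK_pos : 0 < aK := by
  have := sqrt5_bounds.1; unfold aK; linarith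

lemma bK_pos : 0 < bK := by
  have := sqrt5_bounds.1; unfold bK; linarith

lemma ab_sum : aK + bK = Real.sqrt 5 := by unfold aK bK; ring

lemma ab_mul : aK * bK = 1 := by
  have h1 : Real.sqrt 5 * Real.sqrt 5 = 5 := Real.mul_self_sqrt (by norm_num)
  unfold aK bK; nlinarith

lemma sqrt_aK_sq : Real.sqrt aK * Real.sqrt aK = aK := Real.mul_self_sqrt aK_pos.le
lemma sqrt_bK_sq : Real.sqrt bK * Real.sqrt bK = bK := Real.mul_self_sqrt bK_pos.le

lemma sqrt_aK_le : Real.sqrt aK ≤ 1.3 := by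
  have ha : aK ≤ 1.62 := by have := sqrt5_bounds.2; unfold aK; linarith
  have h1 := sqrt_aK_sq
  have h2 := Real.sqrt_nonneg aK
  nlinarith

lemma sqrt_bK_le : Real.sqrt bK ≤ 1 := by
  have hb : bK ≤ 1 := by have := sqrt5_bounds.2; unfold bK; linarith
  have h1 := sqrt_bK_sq
  have h2 := Real.sqrt_nonneg bK
  nlinarith

lemma cosh_quadratic (t : ℝ) : 1 + t ^ 2 / 2 ≤ Real.cosh t := by
  have h : Real.cosh (2 * (t / 2)) = Real.cosh (t / 2) ^ 2 + Real.sinh (t / 2) ^ 2 :=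
    Real.cosh_two_mul (t / 2)
  rw [show 2 * (t / 2) = t by ring] at h
  have h2 : Real.cosh (t / 2) ^ 2 = Real.sinh (t / 2) ^ 2 + 1 := Real.cosh_sq (t / 2)
  have h3 : (t / 2) ^ 2 ≤ Real.sinh (t / 2) ^ 2 := by
    rcases le_or_gt 0 (t / 2) with hc | hc
    · have := Real.self_le_sinh_iff.mpr hc
      nlinarith
    · have := (Real.sinh_lt_self_iff).mpr hc
      nlinarith
  nlinarith

lemma hasDerivAt_g₀ (x : ℝ) : HasDerivAt g₀ (f₀ x) x := by
  have ha : HasDerivAt (fun y : ℝ => Real.sqrt aK * y) (Real.sqrt aK * 1) x :=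
    (hasDerivAt_id x).const_mul _
  have hb : HasDerivAt (fun y : ℝ => Real.sqrt bK * y) (Real.sqrt bK * 1) x :=
    (hasDerivAt_id x).const_mul _
  have h1 : HasDerivAt (fun y : ℝ => Real.cosh (Real.sqrt aK * y))
      (Real.sinh (Real.sqrt aK * x) * (Real.sqrt aK * 1)) x :=
    (Real.hasDerivAt_cosh _).comp x ha
  have h2 : HasDerivAt (fun y : ℝ => Real.cos (Real.sqrt bK * y))
      (-Real.sin (Real.sqrt bK * x) * (Real.sqrt bK * 1)) x :=
    (Real.hasDerivAt_cos _).comp x hb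
  have h := (((h1.const_mul (1 / (aK * (aK + bK)))).add
      (h2.const_mul (1 / (bK * (aK + bK))))).sub_const
      (1 / (aK * (aK + bK)))).sub_const (1 / (bK * (aK + bK)))
  refine h.congr_deriv ?_
  have hsa : Real.sqrt aK ≠ 0 := (Real.sqrt_pos.mpr aK_pos).ne'
  have hsb : Real.sqrt bK ≠ 0 := (Real.sqrt_pos.mpr bK_pos).ne'
  have hs5 : aK + bK ≠ 0 := by rw [ab_sum]; positivity
  unfold f₀
  set sa := Real.sqrt aK with hsadef
  set sb := Real.sqrt bK with hsbdef
  rw [← sqrt_aK_sq, ← sqrt_bK_sq] at hs5 ⊢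
  rw [← hsadef, ← hsbdef] at hs5 ⊢
  field_simp
  ring

lemma sinh_sqrt_aK_lt : Real.sinh (Real.sqrt aK) < 2.8 := by
  have h1 : Real.sinh (Real.sqrt aK) ≤ Real.sinh 1.3 := Real.sinh_le_sinh.mpr sqrt_aK_le
  have h2 : Real.sinh 1.3 = (Real.exp 1.3 - Real.exp (-1.3)) / 2 := Real.sinh_eq 1.3
  have h3 : Real.exp 1.3 < 5.6 := by
    have e1 : Real.exp 1.3 * Real.exp 1.3 = Real.exp 2.6 := by
      rw [← Real.exp_add]; norm_num
    have e2 : Real.exp 2.6 ≤ Real.exp 3 := Real.exp_le_exp.mpr (by norm_num)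
    have e3 : Real.exp 3 = Real.exp 1 * Real.exp 1 * Real.exp 1 := by
      rw [← Real.exp_add, ← Real.exp_add]; norm_num
    have e4 := Real.exp_one_lt_d9
    have e5 := Real.exp_pos 1
    have e6 := Real.exp_pos (1.3 : ℝ)
    nlinarith
  have h4 := Real.exp_pos (-1.3 : ℝ)
  linarith

lemma f₀_ge : ∀ x ∈ Set.Icc (-1 : ℝ) 0, -1 ≤ f₀ x := by
  intro x hx
  obtain ⟨hx1, hx2⟩ := hx
  have hsa : 0 < Real.sqrt aK := Real.sqrt_pos.mpr aK_pos
  have hsb : 0 < Real.sqrt bK := Real.sqrt_pos.mpr bK_pos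
  have hs5 : 2.2 ≤ Real.sqrt 5 := sqrt5_bounds.1
  -- sin term is nonpositive
  have hsin : Real.sin (Real.sqrt bK * x) ≤ 0 := by
    have h1 : 0 ≤ Real.sin (Real.sqrt bK * (-x)) := by
      apply Real.sin_nonneg_of_nonneg_of_le_pi
      · nlinarith
      · have : Real.sqrt bK * (-x) ≤ 1 := by nlinarith [sqrt_bK_le]
        linarith [Real.two_le_pi]
    have h2 : Real.sqrt bK * (-x) = -(Real.sqrt bK * x) := by ring
    rw [h2, Real.sin_neg] at h1
    linarith
  -- sinh term bounded below
  have hsinh : -Real.sinh (Real.sqrt aK) ≤ Real.sinh (Real.sqrt aK * x) := by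
    rw [← Real.sinh_neg]
    apply Real.sinh_le_sinh.mpr
    nlinarith
  -- sinh √a ≤ √a √5
  have hkey : Real.sinh (Real.sqrt aK) ≤ Real.sqrt aK * Real.sqrt 5 := by
    have h1 : Real.sqrt aK * Real.sqrt 5 ≥ 2.8 := by
      have e1 := sqrt_aK_sq
      have e2 : Real.sqrt 5 * Real.sqrt 5 = 5 := Real.mul_self_sqrt (by norm_num)
      have e3 : 1.6 ≤ aK := by have := sqrt5_bounds.1; unfold aK; linarith
      have e4 : 0 ≤ Real.sqrt aK * Real.sqrt 5 := by positivity
      nlinarith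
    linarith [sinh_sqrt_aK_lt]
  unfold f₀
  rw [ab_sum]
  have hcoef : 0 < Real.sqrt aK * Real.sqrt 5 := by positivity
  have hcb : 0 ≤ 1 / (Real.sqrt bK * Real.sqrt 5) := by positivity
  have h1 : -1 ≤ 1 / (Real.sqrt aK * Real.sqrt 5) * Real.sinh (Real.sqrt aK * x) := by
    have hA : 1 / (Real.sqrt aK * Real.sqrt 5) * Real.sinh (Real.sqrt aK) ≤ 1 := by
      rw [div_mul_eq_mul_div, one_mul, div_le_one hcoef]
      exact hkey
    have hB : 1 / (Real.sqrt aK * Real.sqrt 5) * (-Real.sinh (Real.sqrt aK)) ≤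
        1 / (Real.sqrt aK * Real.sqrt 5) * Real.sinh (Real.sqrt aK * x) :=
      mul_le_mul_of_nonneg_left hsinh (by positivity)
    have hC : 1 / (Real.sqrt aK * Real.sqrt 5) * (-Real.sinh (Real.sqrt aK)) =
        -(1 / (Real.sqrt aK * Real.sqrt 5) * Real.sinh (Real.sqrt aK)) := by ring
    linarith
  have h2 : 1 / (Real.sqrt bK * Real.sqrt 5) * Real.sin (Real.sqrt bK * x) ≤ 0 :=
    mul_nonpos_of_nonneg_of_nonpos hcb hsin
  linarith

lemma g₀_zero : g₀ 0 = 0 := by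
  simp [g₀]

theorem g₀_bounds :
    ∀ x ∈ Set.Icc (-1 : ℝ) 0, 0 ≤ g₀ x ∧ g₀ x ≤ -x ∧ |g₀ x| ≤ |x| := by
  intro x hx
  obtain ⟨hx1, hx2⟩ := hx
  have ha := aK_pos
  have hb := bK_pos
  have hs5 : (0:ℝ) < Real.sqrt 5 := by linarith [sqrt5_bounds.1]
  -- Part 1 : 0 ≤ g₀ x
  have part1 : 0 ≤ g₀ x := by
    have hu : (Real.sqrt aK * x) ^ 2 = aK * x ^ 2 := by
      rw [mul_pow, sq, sqrt_aK_sq]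
    have hv : (Real.sqrt bK * x) ^ 2 = bK * x ^ 2 := by
      rw [mul_pow, sq, sqrt_bK_sq]
    have hch := cosh_quadratic (Real.sqrt aK * x)
    have hcs := Real.one_sub_sq_div_two_le_cos (x := Real.sqrt bK * x)
    have hmul := ab_mul
    have expand : g₀ x = (bK * (Real.cosh (Real.sqrt aK * x) - 1)
        + aK * (Real.cos (Real.sqrt bK * x) - 1)) / (aK * bK * Real.sqrt 5) := by
      unfold g₀
      rw [ab_sum]
      field_simp
      ring
    rw [expand]
    apply div_nonneg _ (by positivity)
    nlinarith [hch, hcs, hu, hv, mul_le_mul_of_nonneg_left hcs hb.le]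
  -- Part 2 : g₀ x ≤ -x via monotonicity of g₀ + id on [-1, 0]
  have part2 : g₀ x ≤ -x := by
    have hmono : MonotoneOn (fun y => g₀ y + y) (Set.Icc (-1 : ℝ) 0) := by
      apply monotoneOn_of_deriv_nonneg (convex_Icc _ _)
      · intro y _
        exact (((hasDerivAt_g₀ y).add (hasDerivAt_id y)).continuousAt).continuousWithinAt
      · intro y _
        exact (((hasDerivAt_g₀ y).add (hasDerivAt_id y)).differentiableAt).differentiableWithinAt
      · intro y hy
        rw [interior_Icc] at hy
        have hd : deriv (fun y => g₀ y + y) y = f₀ y + 1 :=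
          ((hasDerivAt_g₀ y).add (hasDerivAt_id y)).deriv
        rw [hd]
        have := f₀_ge y ⟨hy.1.le, hy.2.le⟩
        linarith
    have h0 : (0 : ℝ) ∈ Set.Icc (-1 : ℝ) 0 := by constructor <;> norm_num
    have hxm : x ∈ Set.Icc (-1 : ℝ) 0 := ⟨hx1, hx2⟩
    have := hmono hxm h0 hx2
    simp only [g₀_zero, add_zero] at this
    linarith
  refine ⟨part1, part2, ?_⟩
  rw [abs_of_nonneg part1, abs_of_nonpos hx2]
  exact part2
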